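/- For every natural number q ≥ 2, the derivatives at s = 0 of the Hurwitz zeta function at rational points satisfy Σ_{r=1}^{q−1} ζ'(0, r/q) = −(1/2) log q. -/

import Mathlib

open HurwitzZeta Complex Finset

private lemma LFunction_one_eq_riemannZeta (q : ℕ) [NeZero q] {s : ℂ} (hs : s ≠ 1) :
    ZMod.LFunction (fun _ : ZMod q => (1 : ℂ)) s = riemannZeta s := by
  let U : Set ℂ := {z : ℂ | z ≠ 1}
  have hUo : IsOpen U := isOpen_compl_singleton
  have hf : AnalyticOnNhd ℂ (ZMod.LFunction (fun _ : ZMod q => (1 : ℂ))) U :=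
    DifferentiableOn.analyticOnNhd
      (fun u hu => (ZMod.differentiableAt_LFunction _ u (Or.inl hu)).differentiableWithinAt) hUo
  have hg : AnalyticOnNhd ℂ riemannZeta U :=
    DifferentiableOn.analyticOnNhd
      (fun u hu => (differentiableAt_riemannZeta hu).differentiableWithinAt) hUo
  have hUc : IsPreconnected U :=
    (isConnected_compl_singleton_of_one_lt_rank (by simp) _).isPreconnected
  have hUmem : (2 : ℂ) ∈ U := by norm_num [U]
  have hV : {z : ℂ | 1 < z.re} ∈ nhds (2 : ℂ) :=
    (continuous_re.isOpen_preimage _ isOpen_Ioi).mem_nhds (by simp)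
  refine hf.eqOn_of_preconnected_of_eventuallyEq hg hUc hUmem ?_ hs
  filter_upwards [hV] with z hz
  rw [ZMod.LFunction_eq_LSeries _ hz, ← LSeries_one_eq_riemannZeta hz]
  rfl

theorem hurwitzZeta_deriv_zero_sum (q : ℕ) (hq : 2 ≤ q) :
    ∑ r ∈ Finset.Ico 1 q,
        deriv (fun s => hurwitzZeta (((r : ℝ) / q : ℝ) : UnitAddCircle) s) 0 =
      -(1/2 : ℂ) * (Real.log q : ℂ) := by
  have : NeZero q := ⟨by omega⟩
  have hq0 : (q : ℂ) ≠ 0 := Nat.cast_ne_zero.mpr (by omega)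
  -- the sum over all residues equals q^s * ζ(s) for s ≠ 1
  have key : ∀ s : ℂ, s ≠ 1 →
      (∑ j : ZMod q, hurwitzZeta (ZMod.toAddCircle j) s) = (q : ℂ) ^ s * riemannZeta s := by
    intro s hs
    have h := LFunction_one_eq_riemannZeta q hs
    rw [ZMod.LFunction] at h
    simp only [one_mul] at h
    rw [← h, cpow_neg, ← mul_assoc, mul_inv_cancel₀ (by simp [Complex.cpow_eq_zero_iff, hq0]), one_mul]
  -- derivative of the full sum at 0
  have hds : ∀ j : ZMod q, DifferentiableAt ℂ (fun s => hurwitzZeta (ZMod.toAddCircle j) s) 0 :=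
    fun j => differentiableAt_hurwitzZeta _ (by norm_num)
  have hsum : deriv (fun s => ∑ j : ZMod q, hurwitzZeta (ZMod.toAddCircle j) s) 0
      = ∑ j : ZMod q, deriv (fun s => hurwitzZeta (ZMod.toAddCircle j) s) 0 := by
    exact deriv_fun_sum (fun j _ => hds j)
  have heq : (fun s => ∑ j : ZMod q, hurwitzZeta (ZMod.toAddCircle j) s)
      =ᶠ[nhds (0 : ℂ)] fun s => (q : ℂ) ^ s * riemannZeta s := by
    filter_upwards [isOpen_compl_singleton.mem_nhds (by norm_num : (0:ℂ) ∉ ({1} : Set ℂ))]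
      with z hz
    exact key z hz
  have hd1 : HasDerivAt (fun s : ℂ => (q : ℂ) ^ s) ((q : ℂ) ^ (0:ℂ) * Complex.log q) 0 :=
    (hasStrictDerivAt_const_cpow (Or.inl hq0)).hasDerivAt
  have hd2 : HasDerivAt riemannZeta (deriv riemannZeta 0) 0 :=
    (differentiableAt_riemannZeta (by norm_num)).hasDerivAt
  have hdm := hd1.fun_mul hd2
  have hderiv : deriv (fun s => ∑ j : ZMod q, hurwitzZeta (ZMod.toAddCircle j) s) 0
      = Complex.log q * (-1/2) + deriv riemannZeta 0 := by
    rw [heq.deriv_eq, hdm.deriv, cpow_zero, riemannZeta_zero]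
    ring
  -- separate the j = 0 term
  have h0 : deriv (fun s => hurwitzZeta (ZMod.toAddCircle (0 : ZMod q)) s) 0
      = deriv riemannZeta 0 := by
    rw [map_zero, hurwitzZeta_zero]
  have hsplit : ∑ j : ZMod q, deriv (fun s => hurwitzZeta (ZMod.toAddCircle j) s) 0
      = deriv riemannZeta 0
        + ∑ j ∈ univ.erase (0 : ZMod q), deriv (fun s => hurwitzZeta (ZMod.toAddCircle j) s) 0 := by
    rw [← h0, ← Finset.add_sum_erase _ _ (mem_univ _)]
  -- reindex the remaining sum
  have hre : ∑ j ∈ univ.erase (0 : ZMod q), deriv (fun s => hurwitzZeta (ZMod.toAddCircle j) s) 0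
      = ∑ r ∈ Finset.Ico 1 q,
        deriv (fun s => hurwitzZeta (((r : ℝ) / q : ℝ) : UnitAddCircle) s) 0 := by
    refine (Finset.sum_nbij' (i := fun j : ZMod q => (ZMod.val j : ℕ))
      (j := fun r : ℕ => (r : ZMod q)) ?_ ?_ ?_ ?_ ?_)
    · intro j hj
      simp only [mem_erase, mem_univ, and_true] at hj
      have := ZMod.val_lt j
      have : 0 < ZMod.val j :=
        Nat.pos_of_ne_zero fun h => hj ((ZMod.val_eq_zero j).mp h)
      simp only [mem_Ico]
      exact ⟨this, ZMod.val_lt j⟩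
    · intro r hr
      simp only [mem_Ico] at hr
      simp only [mem_erase, mem_univ, and_true]
      intro h
      have := ZMod.val_cast_of_lt hr.2
      rw [h, ZMod.val_zero] at this
      omega
    · intro j hj
      exact ZMod.natCast_zmod_val j
    · intro r hr
      simp only [mem_Ico] at hr
      exact ZMod.val_cast_of_lt hr.2
    · intro j hj
      congr 1
      rw [ZMod.toAddCircle_apply]
  rw [hsum] at hderiv
  rw [hsplit] at hderiv
  rw [hre] at hderiv
  have := hderiv
  push_cast [Complex.ofReal_log (by positivity : (0:ℝ) ≤ (q:ℝ))] at this ⊢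
  linear_combination this
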